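/- Let ℓ and r be positive integers, let f_1, …, f_k ∈ [0,1), let z ∈ ℝ, and set f(t) = Σ_{j=1}^k e^{2πi f_j t}. Let c'_t = ∫_0^1 K_ℓ(x)^r e^{−2πi t x} dx for integers t (the Fourier coefficients of K_ℓ^r, which vanish for |t| > rℓ). Then Σ_{t=−rℓ}^{rℓ} c'_t | f(t) − e^{2πi t z} |² = 1 + Σ_{j=1}^k Σ_{j'=1}^k K_ℓ(f_j − f_{j'})^r − 2 Σ_{j=1}^k K_ℓ(z − f_j)^r. -/

import Mathlib

open Complex Finset

/-- The normalized Fejér kernel of order `ℓ`: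
`K_ℓ(x) = (1/ℓ²) |Σ_{j=0}^{ℓ-1} e^{2πijx}|²`. -/
noncomputable def fejer (ℓ : ℕ) (x : ℝ) : ℝ :=
  (1 / (ℓ : ℝ) ^ 2) *
    ‖∑ j ∈ Finset.range ℓ,
      Complex.exp (2 * Real.pi * Complex.I * (j : ℂ) * (x : ℂ))‖ ^ 2


noncomputable def ce (m : ℤ) (x : ℝ) : ℂ :=
  Complex.exp (2 * Real.pi * Complex.I * (m : ℂ) * (x : ℂ))

lemma ce_mul (s u : ℤ) (x : ℝ) : ce s x * ce u x = ce (s + u) x := by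
  rw [ce, ce, ce, ← Complex.exp_add]
  congr 1
  push_cast
  ring

lemma conj_ce (t : ℤ) (a : ℝ) : (starRingEnd ℂ) (ce t a) = ce (-t) a := by
  rw [ce, ce, ← Complex.exp_conj]
  congr 1
  simp only [map_mul, map_ofNat, Complex.conj_I, Complex.conj_ofReal, map_intCast]
  push_cast
  ring

lemma continuous_ce (m : ℤ) : Continuous (ce m) := by
  unfold ce
  fun_prop

lemma integral_ce (m : ℤ) :
    (∫ x in (0:ℝ)..1, ce m x) = if m = 0 then 1 else 0 := by
  split_ifs with h
  · simp [ce, h]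
  · have hc : (2 * (Real.pi : ℂ) * Complex.I * (m : ℂ)) ≠ 0 := by
      simp [Real.pi_ne_zero, Complex.I_ne_zero, h]
    have key := integral_exp_mul_complex (a := 0) (b := 1) hc
    have h2 : (∫ x in (0:ℝ)..1, ce m x)
        = ∫ x in (0:ℝ)..1, Complex.exp (2 * (Real.pi : ℂ) * Complex.I * (m : ℂ) * (x : ℂ)) := rfl
    have hone : Complex.exp (2 * (Real.pi:ℂ) * Complex.I * (m:ℂ) * ((1:ℝ):ℂ)) = 1 := by
      rw [show (2 * (Real.pi:ℂ) * Complex.I * (m:ℂ) * ((1:ℝ):ℂ)) = (m:ℂ) * (2 * Real.pi * Complex.I) by push_cast; ring]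
      exact Complex.exp_int_mul_two_pi_mul_I m
    have hzero : Complex.exp (2 * (Real.pi:ℂ) * Complex.I * (m:ℂ) * ((0:ℝ):ℂ)) = 1 := by
      simp
    rw [h2, key, hone, hzero]
    simp

/-- `T` is a trig polynomial of degree ≤ n with coefficients `P`. -/
def IsTP (n : ℤ) (P : ℤ → ℂ) (T : ℝ → ℂ) : Prop :=
  (∀ t, t ∉ Finset.Icc (-n) n → P t = 0) ∧
  ∀ x : ℝ, T x = ∑ t ∈ Finset.Icc (-n) n, P t * ce t x

lemma IsTP.mul {m n : ℤ} (hm : 0 ≤ m) (hn : 0 ≤ n) {P Q : ℤ → ℂ} {T U : ℝ → ℂ}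
    (hP : IsTP m P T) (hQ : IsTP n Q U) :
    IsTP (m + n) (fun t => ∑ s ∈ Finset.Icc (-m) m, P s * Q (t - s)) (fun x => T x * U x) := by
  obtain ⟨hP0, hPrep⟩ := hP
  obtain ⟨hQ0, hQrep⟩ := hQ
  constructor
  · intro t ht
    apply Finset.sum_eq_zero
    intro s hs
    rw [hQ0 (t - s), mul_zero]
    simp only [Finset.mem_Icc] at *
    omega
  · intro x
    simp only []
    rw [hPrep x, hQrep x, Finset.sum_mul_sum]
    have key : ∀ s ∈ Finset.Icc (-m) m,
        ∑ u ∈ Finset.Icc (-n) n, (P s * ce s x) * (Q u * ce u x)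
        = ∑ t ∈ Finset.Icc (-(m+n)) (m+n), P s * Q (t - s) * ce t x := by
      intro s hs
      rw [Finset.mem_Icc] at hs
      have hsub : Finset.Icc (-(m+n)) (m+n) ⊇
          (Finset.Icc (-n) n).image (fun u => s + u) := by
        intro t ht
        simp only [Finset.mem_image, Finset.mem_Icc] at *
        omega
      rw [← Finset.sum_subset hsub]
      · rw [Finset.sum_image (by intro a _ b _ h; simp only at h; omega)]
        apply Finset.sum_congr rfl
        intro u hu
        rw [← ce_mul s u x, add_sub_cancel_left]
        ring
      · intro t ht hnt
        by_cases hmem : t - s ∈ Finset.Icc (-n) n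
        · exact absurd (Finset.mem_image.mpr ⟨t - s, hmem, by omega⟩) hnt
        · rw [hQ0 _ hmem, mul_zero, zero_mul]
    rw [Finset.sum_congr rfl key, Finset.sum_comm]
    apply Finset.sum_congr rfl
    intro t _
    rw [Finset.sum_mul]

/-- fejer as complex: D * conj D scaled. -/
lemma fejer_eq_double_sum (ℓ : ℕ) (x : ℝ) :
    ((fejer ℓ x : ℝ) : ℂ) = (1 / (ℓ : ℂ) ^ 2) *
      ∑ j ∈ Finset.range ℓ, ∑ j' ∈ Finset.range ℓ, ce ((j : ℤ) - (j' : ℤ)) x := by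
  have hD : ∀ j : ℕ, Complex.exp (2 * Real.pi * Complex.I * (j : ℂ) * (x : ℂ)) = ce (j : ℤ) x := by
    intro j; rw [ce]; push_cast; ring_nf
  rw [fejer]
  push_cast
  set D := ∑ j ∈ Finset.range ℓ, Complex.exp (2 * Real.pi * Complex.I * (j : ℂ) * (x : ℂ)) with hDdef
  have habs : ((‖D‖ : ℝ) : ℂ) ^ 2 = D * (starRingEnd ℂ) D := by
    rw [Complex.mul_conj]
    rw [← Complex.sq_norm]
    push_cast
    ring
  rw [habs]
  have hconj : (starRingEnd ℂ) D = ∑ j' ∈ Finset.range ℓ, ce (-(j' : ℤ)) x := by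
    rw [hDdef, map_sum]
    apply Finset.sum_congr rfl
    intro j' _
    rw [hD j', conj_ce]
  rw [hconj, hDdef]
  rw [Finset.sum_mul_sum]
  congr 1
  apply Finset.sum_congr rfl
  intro j _
  apply Finset.sum_congr rfl
  intro j' _
  rw [hD j, ce_mul]
  congr 1

lemma fejer_isTP (ℓ : ℕ) :
    IsTP (ℓ : ℤ) (fun t => (1 / (ℓ : ℂ) ^ 2) *
        ∑ j ∈ Finset.range ℓ, ∑ j' ∈ Finset.range ℓ, if ((j : ℤ) - (j' : ℤ)) = t then 1 else 0)
      (fun x => ((fejer ℓ x : ℝ) : ℂ)) := by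
  constructor
  · intro t ht
    simp only [Finset.mem_Icc] at ht
    rw [mul_eq_zero]
    right
    apply Finset.sum_eq_zero; intro j hj
    apply Finset.sum_eq_zero; intro j' hj'
    rw [Finset.mem_range] at hj hj'
    rw [if_neg (by omega)]
  · intro x
    simp only []
    rw [fejer_eq_double_sum]
    have : ∑ t ∈ Finset.Icc (-(ℓ:ℤ)) ℓ,
        ((1 / (ℓ : ℂ) ^ 2) * ∑ j ∈ Finset.range ℓ, ∑ j' ∈ Finset.range ℓ,
          if ((j : ℤ) - (j' : ℤ)) = t then (1:ℂ) else 0) * ce t x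
        = (1 / (ℓ : ℂ) ^ 2) * ∑ t ∈ Finset.Icc (-(ℓ:ℤ)) ℓ,
          (∑ j ∈ Finset.range ℓ, ∑ j' ∈ Finset.range ℓ,
            if ((j : ℤ) - (j' : ℤ)) = t then (1:ℂ) else 0) * ce t x := by
      rw [Finset.mul_sum]
      apply Finset.sum_congr rfl
      intro t _
      ring
    rw [this]
    congr 1
    simp only [Finset.sum_mul]
    symm
    rw [Finset.sum_comm]
    apply Finset.sum_congr rfl
    intro j hj
    rw [Finset.sum_comm]
    apply Finset.sum_congr rfl
    intro j' hj'
    simp only [ite_mul, one_mul, zero_mul]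
    rw [Finset.sum_ite_eq, if_pos]
    · rw [Finset.mem_range] at hj hj'
      rw [Finset.mem_Icc]
      omega

lemma IsTP.congr {n : ℤ} {P : ℤ → ℂ} {T U : ℝ → ℂ} (h : IsTP n P T)
    (he : ∀ x, U x = T x) : IsTP n P U :=
  ⟨h.1, fun x => (he x).trans (h.2 x)⟩

lemma one_isTP : IsTP 0 (fun t => if t = 0 then 1 else 0) (fun _ => 1) := by
  constructor
  · intro t ht
    simp only [Finset.mem_Icc] at ht
    show (if t = 0 then (1:ℂ) else 0) = 0
    rw [if_neg (by omega)]
  · intro x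
    simp [ce]

lemma fejer_pow_isTP (ℓ : ℕ) (r : ℕ) :
    ∃ P : ℤ → ℂ, IsTP ((r : ℤ) * ℓ) P (fun x => ((fejer ℓ x : ℝ) : ℂ) ^ r) := by
  induction r with
  | zero =>
    refine ⟨fun t => if t = 0 then 1 else 0, ?_⟩
    have h0 : ((0 : ℕ) : ℤ) * ℓ = 0 := by simp
    rw [h0]
    exact one_isTP.congr (fun x => by simp)
  | succ r ih =>
    obtain ⟨P, hP⟩ := ih
    have hmul := (hP.mul (by positivity) (by positivity) (fejer_isTP ℓ))
    have hidx : ((r : ℤ) * ℓ + ℓ) = ((r + 1 : ℕ) : ℤ) * ℓ := by push_cast; ring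
    rw [hidx] at hmul
    exact ⟨_, hmul.congr (fun x => by simp [pow_succ])⟩

lemma coeff_formula {n : ℤ} {P : ℤ → ℂ} {T : ℝ → ℂ} (h : IsTP n P T)
    {t : ℤ} (ht : t ∈ Finset.Icc (-n) n) :
    (∫ x in (0:ℝ)..1, T x * ce (-t) x) = P t := by
  have h1 : (∫ x in (0:ℝ)..1, T x * ce (-t) x)
      = ∫ x in (0:ℝ)..1, ∑ s ∈ Finset.Icc (-n) n, P s * ce (s + -t) x := by
    apply intervalIntegral.integral_congr
    intro x _
    show T x * ce (-t) x = _
    rw [h.2 x, Finset.sum_mul]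
    apply Finset.sum_congr rfl
    intro s _
    rw [mul_assoc, ce_mul]
  rw [h1, intervalIntegral.integral_finset_sum]
  · have h2 : ∀ s ∈ Finset.Icc (-n) n,
        (∫ x in (0:ℝ)..1, P s * ce (s + -t) x)
        = if s = t then P s else 0 := by
      intro s _
      rw [intervalIntegral.integral_const_mul, integral_ce]
      by_cases hs : s = t
      · rw [if_pos (by omega), if_pos hs, mul_one]
      · rw [if_neg (by omega), if_neg hs, mul_zero]
    rw [Finset.sum_congr rfl h2, Finset.sum_ite_eq' (Finset.Icc (-n) n) t P, if_pos ht]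
  · intro s _
    apply Continuous.intervalIntegrable
    exact continuous_const.mul (continuous_ce _)

lemma eval_formula {n : ℤ} {P : ℤ → ℂ} {T : ℝ → ℂ} (h : IsTP n P T)
    (c : ℤ → ℂ) (hc : ∀ t ∈ Finset.Icc (-n) n, c t = P t) (a : ℝ) :
    ∑ t ∈ Finset.Icc (-n) n, c t * ce t a = T a := by
  rw [h.2 a]
  exact Finset.sum_congr rfl (fun t ht => by rw [hc t ht])

lemma fejer_even (ℓ : ℕ) (x : ℝ) : fejer ℓ (-x) = fejer ℓ x := by
  rw [fejer, fejer]
  congr 2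
  have : ∀ j : ℕ, Complex.exp (2 * Real.pi * Complex.I * (j : ℂ) * ((-x : ℝ) : ℂ))
      = (starRingEnd ℂ) (Complex.exp (2 * Real.pi * Complex.I * (j : ℂ) * (x : ℂ))) := by
    intro j
    rw [← Complex.exp_conj]
    congr 1
    simp only [map_mul, map_ofNat, Complex.conj_I, Complex.conj_ofReal, map_natCast]
    push_cast
    ring
  rw [Finset.sum_congr rfl (fun j _ => this j), ← map_sum, Complex.norm_conj]

lemma fejer_zero (ℓ : ℕ) (hℓ : 0 < ℓ) : fejer ℓ 0 = 1 := by
  rw [fejer]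
  simp only [Complex.ofReal_zero, mul_zero, Complex.exp_zero, Finset.sum_const,
    Finset.card_range, nsmul_eq_mul, mul_one]
  rw [Complex.norm_natCast]
  have : (ℓ : ℝ) ≠ 0 := Nat.cast_ne_zero.mpr hℓ.ne'
  field_simp

lemma ce_mul_neg (t : ℤ) (a b : ℝ) : ce t a * ce (-t) b = ce t (a - b) := by
  rw [ce, ce, ce, ← Complex.exp_add]; congr 1; push_cast; ring

lemma ce_swap (t : ℤ) (a : ℝ) :
    Complex.exp (2 * Real.pi * Complex.I * (a : ℂ) * (t : ℂ)) = ce t a := by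
  rw [ce]; congr 1; ring

lemma ce_zero_right (t : ℤ) : ce t 0 = 1 := by simp [ce]

lemma ce_neg_exp (t : ℤ) (x : ℝ) :
    Complex.exp (-(2 * Real.pi * Complex.I * (t : ℂ) * (x : ℂ))) = ce (-t) x := by
  rw [ce]; congr 1; push_cast; ring

theorem stmt15 (ℓ r k : ℕ) (hℓ : 0 < ℓ) (hr : 0 < r)
    (f : Fin k → ℝ) (hf : ∀ j, f j ∈ Set.Ico (0 : ℝ) 1) (z : ℝ)
    (F : ℤ → ℂ)
    (hF : ∀ t : ℤ, F t = ∑ j, Complex.exp (2 * Real.pi * Complex.I * (f j : ℂ) * (t : ℂ)))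
    (c' : ℤ → ℂ)
    (hc' : ∀ t : ℤ, c' t = ∫ x in (0:ℝ)..1,
      ((fejer ℓ x : ℂ)) ^ r * Complex.exp (-(2 * Real.pi * Complex.I * (t : ℂ) * (x : ℂ)))) :
    (∑ t ∈ Finset.Icc (-(r * ℓ : ℤ)) (r * ℓ : ℤ),
        c' t * ((‖F t - Complex.exp (2 * Real.pi * Complex.I * (z : ℂ) * (t : ℂ))‖ ^ 2 : ℝ) : ℂ))
      = ((1 + (∑ j, ∑ j', (fejer ℓ (f j - f j')) ^ r) - 2 * (∑ j, (fejer ℓ (z - f j)) ^ r) : ℝ) : ℂ) := by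
  obtain ⟨P, hP⟩ := fejer_pow_isTP ℓ r
  set n : ℤ := (r : ℤ) * (ℓ : ℤ) with hn
  have hc'P : ∀ t ∈ Finset.Icc (-n) n, c' t = P t := by
    intro t ht
    rw [hc' t, ← coeff_formula hP ht]
    apply intervalIntegral.integral_congr
    intro x _
    simp only [ce_neg_exp]
  have S : ∀ a : ℝ, ∑ t ∈ Finset.Icc (-n) n, c' t * ce t a = ((fejer ℓ a : ℝ) : ℂ) ^ r :=
    fun a => eval_formula hP c' hc'P a
  have key : ∀ t : ℤ,
      ((‖F t - Complex.exp (2 * Real.pi * Complex.I * (z : ℂ) * (t : ℂ))‖ ^ 2 : ℝ) : ℂ)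
      = (∑ j, ∑ j', ce t (f j - f j')) + ce t 0
        - (∑ j, ce t (f j - z)) - (∑ j, ce t (z - f j)) := by
    intro t
    have hw : F t - Complex.exp (2 * Real.pi * Complex.I * (z : ℂ) * (t : ℂ))
        = (∑ j, ce t (f j)) - ce t z := by
      rw [hF t, ce_swap]
      congr 1
      exact Finset.sum_congr rfl (fun j _ => ce_swap t (f j))
    set w := F t - Complex.exp (2 * Real.pi * Complex.I * (z : ℂ) * (t : ℂ)) with hwdef
    have habs : ((‖w‖ ^ 2 : ℝ) : ℂ) = w * (starRingEnd ℂ) w := by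
      rw [Complex.mul_conj, ← Complex.sq_norm]
    rw [habs, hw]
    have hconj : (starRingEnd ℂ) ((∑ j, ce t (f j)) - ce t z)
        = (∑ j, ce (-t) (f j)) - ce (-t) z := by
      rw [map_sub, map_sum, conj_ce]
      congr 1
      exact Finset.sum_congr rfl (fun j _ => conj_ce t (f j))
    rw [hconj, sub_mul, mul_sub, mul_sub]
    rw [Finset.sum_mul_sum]
    have e1 : ∀ j ∈ (Finset.univ : Finset (Fin k)), ∀ j' ∈ (Finset.univ : Finset (Fin k)),
        ce t (f j) * ce (-t) (f j') = ce t (f j - f j') := fun j _ j' _ => ce_mul_neg _ _ _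
    rw [Finset.sum_congr rfl (fun j hj => Finset.sum_congr rfl (fun j' hj' => e1 j hj j' hj'))]
    have e2 : (∑ j, ce t (f j)) * ce (-t) z = ∑ j, ce t (f j - z) := by
      rw [Finset.sum_mul]
      exact Finset.sum_congr rfl (fun j _ => ce_mul_neg _ _ _)
    have e3 : ce t z * ∑ j, ce (-t) (f j) = ∑ j, ce t (z - f j) := by
      rw [Finset.mul_sum]
      exact Finset.sum_congr rfl (fun j _ => ce_mul_neg _ _ _)
    have e4 : ce t z * ce (-t) z = ce t 0 := by
      rw [ce_mul_neg, sub_self]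
    rw [e2, e3, e4]
    ring
  have main : (∑ t ∈ Finset.Icc (-n) n,
      c' t * ((‖F t - Complex.exp (2 * Real.pi * Complex.I * (z : ℂ) * (t : ℂ))‖ ^ 2 : ℝ) : ℂ))
      = (∑ t ∈ Finset.Icc (-n) n, ∑ j, ∑ j', c' t * ce t (f j - f j'))
        + (∑ t ∈ Finset.Icc (-n) n, c' t * ce t 0)
        - (∑ t ∈ Finset.Icc (-n) n, ∑ j, c' t * ce t (f j - z))
        - (∑ t ∈ Finset.Icc (-n) n, ∑ j, c' t * ce t (z - f j)) := by
    rw [← Finset.sum_add_distrib, ← Finset.sum_sub_distrib, ← Finset.sum_sub_distrib]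
    apply Finset.sum_congr rfl
    intro t _
    rw [key t]
    simp only [mul_add, mul_sub, Finset.mul_sum]
  have h1 : (∑ t ∈ Finset.Icc (-n) n, ∑ j, ∑ j', c' t * ce t (f j - f j'))
      = ∑ j, ∑ j', ((fejer ℓ (f j - f j') : ℝ) : ℂ) ^ r := by
    rw [Finset.sum_comm]
    apply Finset.sum_congr rfl
    intro j _
    rw [Finset.sum_comm]
    exact Finset.sum_congr rfl (fun j' _ => S (f j - f j'))
  have h2 : (∑ t ∈ Finset.Icc (-n) n, c' t * ce t 0) = 1 := by
    rw [S 0, fejer_zero ℓ hℓ]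
    simp
  have h3 : (∑ t ∈ Finset.Icc (-n) n, ∑ j, c' t * ce t (f j - z))
      = ∑ j, ((fejer ℓ (z - f j) : ℝ) : ℂ) ^ r := by
    rw [Finset.sum_comm]
    apply Finset.sum_congr rfl
    intro j _
    rw [S (f j - z)]
    congr 2
    rw [show f j - z = -(z - f j) by ring, fejer_even]
  have h4 : (∑ t ∈ Finset.Icc (-n) n, ∑ j, c' t * ce t (z - f j))
      = ∑ j, ((fejer ℓ (z - f j) : ℝ) : ℂ) ^ r := by
    rw [Finset.sum_comm]
    apply Finset.sum_congr rfl
    intro j _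
    exact S (z - f j)
  rw [show Finset.Icc (-(r * ℓ : ℤ)) (r * ℓ : ℤ) = Finset.Icc (-n) n by rw [hn]]
  rw [main, h1, h2, h3, h4]
  push_cast
  ring
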